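/- arXiv:2412.00418 — 2 statements merged into one kernel-verified Lean document; each statement's English description precedes it below -/
import Mathlib

section
/- Let μ, ν be vectors in a real inner product space with μ ≠ ν, let R > 0, and let p', q' be real numbers with 0 < p' ≤ q'. Define w* = (R/‖ν−μ‖)•(ν−μ), b* = −(1/2)⟪μ+ν, w*⟫, and the test class-1 aggregated mean m₁' = (q'/(p'+q'))•μ + (p'/(p'+q'))•ν. Then the logistic loss of the training-optimal classifier at m₁' satisfies log(1 + exp(−(⟪m₁', w*⟫ + b*))) ≥ R·(q'−p')·‖μ−ν‖/(2(p'+q')). -/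
theorem logistic_loss_at_test_mean_lower_bound
    {E : Type*} [NormedAddCommGroup E] [InnerProductSpace ℝ E]
    (μ ν : E) (hμν : μ ≠ ν) (R : ℝ) (hR : 0 < R)
    (p' q' : ℝ) (hp' : 0 < p') (hpq' : p' ≤ q')
    (w : E) (hw : w = (R / ‖ν - μ‖) • (ν - μ))
    (b : ℝ) (hb : b = -(1 / 2) * (inner ℝ (μ + ν) w : ℝ))
    (m₁' : E)
    (hm₁' : m₁' = (q' / (p' + q')) • μ + (p' / (p' + q')) • ν) :
    Real.log (1 + Real.exp (-((inner ℝ m₁' w : ℝ) + b)))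
      ≥ R * (q' - p') * ‖μ - ν‖ / (2 * (p' + q')) := by
  have hnm : ‖ν - μ‖ ≠ 0 := by
    simpa [sub_eq_zero] using fun h => hμν h.symm
  have hs : 0 < p' + q' := by linarith
  have hnorm : ‖μ - ν‖ = ‖ν - μ‖ := norm_sub_rev _ _
  have hkey : -((inner ℝ m₁' w : ℝ) + b)
      = R * (q' - p') * ‖μ - ν‖ / (2 * (p' + q')) := by
    subst hw hb hm₁'
    rw [hnorm]
    have hinner : ∀ x : E, (inner ℝ x ((R / ‖ν - μ‖) • (ν - μ)) : ℝ)
        = (R / ‖ν - μ‖) * inner ℝ x (ν - μ) := fun x => real_inner_smul_right _ _ _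
    rw [hinner, hinner]
    simp only [inner_add_left, inner_smul_left, inner_sub_right, conj_trivial]
    have h1 : (inner ℝ ν ν : ℝ) = ‖ν - μ‖ ^ 2 + 2 * inner ℝ ν μ - inner ℝ μ μ := by
      have := real_inner_self_eq_norm_sq (ν - μ)
      rw [inner_sub_sub_self] at this
      have hc : (inner ℝ μ ν : ℝ) = inner ℝ ν μ := real_inner_comm _ _
      linarith
    have hc : (inner ℝ μ ν : ℝ) = inner ℝ ν μ := real_inner_comm _ _
    rw [h1, hc]
    field_simp
    ring
  rw [hkey]
  calc R * (q' - p') * ‖μ - ν‖ / (2 * (p' + q'))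
      = Real.log (Real.exp (R * (q' - p') * ‖μ - ν‖ / (2 * (p' + q')))) := by
        rw [Real.log_exp]
    _ ≤ Real.log (1 + Real.exp (R * (q' - p') * ‖μ - ν‖ / (2 * (p' + q')))) := by
        apply Real.log_le_log (Real.exp_pos _)
        linarith [Real.exp_pos (R * (q' - p') * ‖μ - ν‖ / (2 * (p' + q')))]
end

section
/- Let m ≥ 0 and s > 0, and let ν = N(m, s²) be the Gaussian measure on ℝ with mean m and variance s². Then the expected logistic loss of a class-1 example whose score is distributed according to ν satisfies ∫ log(1 + exp(−z)) dν(z) ≥ log 2 · (1/2 − m/(s·√(2π))). -/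
open MeasureTheory ProbabilityTheory

private lemma abs_le_one_add_sq' (x : ℝ) : |x| ≤ 1 + x ^ 2 := by
  nlinarith [sq_nonneg (|x| - 1), sq_abs x, abs_nonneg x]

theorem expected_logistic_loss_gaussian_lower_bound
    (m s : ℝ) (hm : 0 ≤ m) (hs : 0 < s) :
    ∫ z, Real.log (1 + Real.exp (-z)) ∂(gaussianReal m (s ^ 2).toNNReal)
      ≥ Real.log 2 * (1 / 2 - m / (s * Real.sqrt (2 * Real.pi))) := by
  classical
  set v : NNReal := (s ^ 2).toNNReal with hvdef
  have hvcoe : (v : ℝ) = s ^ 2 := Real.coe_toNNReal _ (sq_nonneg s)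
  have hvpos : (0:ℝ) < (v:ℝ) := by rw [hvcoe]; positivity
  have hvne : v ≠ 0 := by
    intro h
    rw [h] at hvcoe
    simp at hvcoe
    nlinarith
  set f : ℝ → ℝ := fun z => Real.log (1 + Real.exp (-z)) with hfdef
  set pdf : ℝ → ℝ := gaussianPDFReal m v with hpdfdef
  have hpi : (0:ℝ) < Real.pi := Real.pi_pos
  have hsqrt : Real.sqrt (2 * Real.pi * (v:ℝ)) = s * Real.sqrt (2 * Real.pi) := by
    rw [hvcoe, Real.sqrt_mul (by positivity), Real.sqrt_sq hs.le, mul_comm]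
  have hc0pos : (0:ℝ) < s * Real.sqrt (2 * Real.pi) := by positivity
  -- pdf basic facts
  have hpdf_nonneg : ∀ x, 0 ≤ pdf x := gaussianPDFReal_nonneg m v
  have hpdf_le : ∀ x, pdf x ≤ (s * Real.sqrt (2 * Real.pi))⁻¹ := by
    intro x
    rw [hpdfdef, gaussianPDFReal, hsqrt]
    have : Real.exp (-(x - m) ^ 2 / (2 * (v:ℝ))) ≤ 1 := by
      rw [Real.exp_le_one_iff]
      exact div_nonpos_of_nonpos_of_nonneg (neg_nonpos.2 (sq_nonneg _)) (by positivity)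
    calc (s * Real.sqrt (2 * Real.pi))⁻¹ * Real.exp (-(x - m) ^ 2 / (2 * (v:ℝ)))
        ≤ (s * Real.sqrt (2 * Real.pi))⁻¹ * 1 := by
          exact mul_le_mul_of_nonneg_left this (by positivity)
      _ = _ := mul_one _
  -- f basic facts
  have hf_nonneg : ∀ z, 0 ≤ f z := fun z =>
    Real.log_nonneg (by linarith [(Real.exp_pos (-z)).le])
  have hf_le : ∀ z, f z ≤ Real.log 2 + |z| := by
    intro z
    rcases le_or_gt 0 z with hz | hz
    · have h1 : 1 + Real.exp (-z) ≤ 2 := by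
        have : Real.exp (-z) ≤ 1 := Real.exp_le_one_iff.2 (by linarith)
        linarith
      have := Real.log_le_log (by positivity) h1
      have h2 : (0:ℝ) ≤ |z| := abs_nonneg z
      calc f z ≤ Real.log 2 := this
        _ ≤ Real.log 2 + |z| := by linarith
    · have h1 : 1 + Real.exp (-z) ≤ 2 * Real.exp (-z) := by
        have : (1:ℝ) ≤ Real.exp (-z) := by
          rw [Real.one_le_exp_iff]; linarith
        linarith
      have h2 := Real.log_le_log (by positivity) h1
      rw [Real.log_mul (by norm_num) (Real.exp_ne_zero _), Real.log_exp] at h2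
      calc f z ≤ Real.log 2 + (-z) := h2
        _ ≤ Real.log 2 + |z| := by
            have := neg_abs_le z
            have := le_abs_self z
            linarith [abs_nonneg z, neg_le_abs z]
  have hf_meas : Measurable f := by
    apply Measurable.log
    exact (measurable_const.add (measurable_id.neg.exp))
  -- integrability of the bound (log 2 + |x|) * pdf x on volume
  set b : ℝ := (2 * (v:ℝ))⁻¹ with hbdef
  have hb : 0 < b := by positivity
  set c0 : ℝ := (Real.sqrt (2 * Real.pi * (v:ℝ)))⁻¹ with hc0def
  have hc0nn : 0 ≤ c0 := by positivity
  have hpdf_eq : ∀ x, pdf x = c0 * Real.exp (-b * (x - m) ^ 2) := by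
    intro x
    rw [hpdfdef, gaussianPDFReal]
    congr 1
    congr 1
    rw [hbdef]; ring
  have h_exp_int : Integrable fun x : ℝ => Real.exp (-b * x ^ 2) :=
    integrable_exp_neg_mul_sq hb
  have h_sq_int : Integrable fun x : ℝ => x ^ 2 * Real.exp (-b * x ^ 2) := by
    have := integrable_rpow_mul_exp_neg_mul_sq hb (s := 2) (by norm_num)
    simpa [Real.rpow_natCast] using this
  have h_shift_int : Integrable fun x : ℝ =>
      (Real.log 2 + |x + m|) * (c0 * Real.exp (-b * x ^ 2)) := by
    have hg : Integrable fun x : ℝ =>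
        (Real.log 2 + m + 1) * c0 * Real.exp (-b * x ^ 2)
          + c0 * (x ^ 2 * Real.exp (-b * x ^ 2)) :=
      (h_exp_int.const_mul _).add (h_sq_int.const_mul _)
    refine hg.mono' ?_ ?_
    · apply Continuous.aestronglyMeasurable
      fun_prop
    · filter_upwards with x
      have h1 : |x + m| ≤ 1 + x ^ 2 + m := by
        calc |x + m| ≤ |x| + |m| := abs_add_le _ _
          _ ≤ (1 + x ^ 2) + m := by
              have := abs_le_one_add_sq' x
              rw [abs_of_nonneg hm]; linarith
          _ = 1 + x ^ 2 + m := by ring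
      have hnn : 0 ≤ (Real.log 2 + |x + m|) * (c0 * Real.exp (-b * x ^ 2)) := by
        have := Real.log_nonneg (by norm_num : (1:ℝ) ≤ 2)
        positivity
      rw [Real.norm_eq_abs, abs_of_nonneg hnn]
      have hE : 0 ≤ c0 * Real.exp (-b * x ^ 2) := by positivity
      calc (Real.log 2 + |x + m|) * (c0 * Real.exp (-b * x ^ 2))
          ≤ (Real.log 2 + (1 + x ^ 2 + m)) * (c0 * Real.exp (-b * x ^ 2)) := by
            apply mul_le_mul_of_nonneg_right _ hE
            linarith
        _ = (Real.log 2 + m + 1) * c0 * Real.exp (-b * x ^ 2)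
              + c0 * (x ^ 2 * Real.exp (-b * x ^ 2)) := by ring
  have h_bound_int : Integrable fun x : ℝ => (Real.log 2 + |x|) * pdf x := by
    have := h_shift_int.comp_sub_right m
    simp only [sub_add_cancel] at this
    refine this.congr ?_
    filter_upwards with x
    rw [hpdf_eq x]
  -- integrability of f * pdf on volume
  have h_fpdf_int : Integrable fun x : ℝ => f x * pdf x := by
    refine h_bound_int.mono' ?_ ?_
    · exact (hf_meas.mul (measurable_gaussianPDFReal m v)).aestronglyMeasurable
    · filter_upwards with x
      rw [Real.norm_eq_abs, abs_of_nonneg (mul_nonneg (hf_nonneg x) (hpdf_nonneg x))]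
      exact mul_le_mul_of_nonneg_right (hf_le x) (hpdf_nonneg x)
  -- integrability of f wrt the gaussian measure
  have hν : gaussianReal m v = volume.withDensity (gaussianPDF m v) :=
    gaussianReal_of_var_ne_zero m hvne
  have hf_int : Integrable f (gaussianReal m v) := by
    rw [hν, integrable_withDensity_iff (measurable_gaussianPDF m v)
      (ae_of_all _ fun x => ENNReal.ofReal_lt_top)]
    refine h_fpdf_int.congr ?_
    filter_upwards with x
    rw [gaussianPDF, ENNReal.toReal_ofReal (hpdf_nonneg x)]
  -- Step: lower bound integral by log 2 * measure(Iic 0)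
  have hind_int : Integrable ((Set.Iic (0:ℝ)).indicator fun _ => Real.log 2)
      (gaussianReal m v) :=
    (integrable_const (Real.log 2)).indicator measurableSet_Iic
  have hle : ∀ z, (Set.Iic (0:ℝ)).indicator (fun _ => Real.log 2) z ≤ f z := by
    intro z
    by_cases hz : z ∈ Set.Iic (0:ℝ)
    · rw [Set.indicator_of_mem hz]
      apply Real.log_le_log (by norm_num)
      have : (1:ℝ) ≤ Real.exp (-z) := by
        rw [Real.one_le_exp_iff]
        simpa using hz
      linarith
    · rw [Set.indicator_of_notMem hz]
      exact hf_nonneg z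
  have hstep1 : Real.log 2 * ((gaussianReal m v) (Set.Iic 0)).toReal
      ≤ ∫ z, f z ∂(gaussianReal m v) := by
    have := integral_mono hind_int hf_int hle
    rwa [integral_indicator_const _ measurableSet_Iic, smul_eq_mul, mul_comm] at this
  -- Step: measure(Iic 0) ≥ 1/2 - m/(s√(2π))
  have hmeas_eq : ((gaussianReal m v) (Set.Iic 0)).toReal = ∫ x in Set.Iic (0:ℝ), pdf x := by
    rw [gaussianReal_apply_eq_integral m hvne,
      ENNReal.toReal_ofReal (setIntegral_nonneg measurableSet_Iic fun x _ => hpdf_nonneg x)]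
  set φ : ℝ → ℝ := fun y => c0 * Real.exp (-b * y ^ 2) with hφdef
  have hφeq : ∀ y, pdf (y + m) = φ y := by
    intro y
    rw [hpdf_eq]
    simp [hφdef]
  have h₁ : MeasurePreserving (fun x : ℝ => x + m) volume volume :=
    measurePreserving_add_right volume m
  have h₂ : MeasurableEmbedding (fun x : ℝ => x + m) :=
    (Homeomorph.addRight m).measurableEmbedding
  have hIic : ∫ x in Set.Iic m, pdf x = ∫ y in Set.Iic (0:ℝ), φ y := by
    have := h₁.setIntegral_preimage_emb h₂ pdf (Set.Iic m)
    simp only [Set.preimage_add_const_Iic, sub_self] at this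
    rw [← this]
    exact setIntegral_congr_fun measurableSet_Iic fun x _ => hφeq x
  have hIoi : ∫ x in Set.Ioi m, pdf x = ∫ y in Set.Ioi (0:ℝ), φ y := by
    have := h₁.setIntegral_preimage_emb h₂ pdf (Set.Ioi m)
    simp only [Set.preimage_add_const_Ioi, sub_self] at this
    rw [← this]
    exact setIntegral_congr_fun measurableSet_Ioi fun x _ => hφeq x
  have hφ_even : ∫ y in Set.Iic (0:ℝ), φ y = ∫ y in Set.Ioi (0:ℝ), φ y := by
    have := integral_comp_neg_Iic (0:ℝ) φ
    simp only [hφdef, neg_sq, neg_zero] at this ⊢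
    exact this
  have hpdf_int : Integrable pdf := integrable_gaussianPDFReal m v
  have htotal : (∫ x in Set.Iic m, pdf x) + ∫ x in Set.Ioi m, pdf x = 1 := by
    have hunion : ∫ x in Set.Iic m ∪ Set.Ioi m, pdf x
        = (∫ x in Set.Iic m, pdf x) + ∫ x in Set.Ioi m, pdf x :=
      setIntegral_union (Set.Iic_disjoint_Ioi (le_refl m)) measurableSet_Ioi
        hpdf_int.integrableOn hpdf_int.integrableOn
    rw [← hunion, Set.Iic_union_Ioi, setIntegral_univ]
    exact integral_gaussianPDFReal_eq_one m hvne
  have hhalf : ∫ x in Set.Iic m, pdf x = 1 / 2 := by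
    linarith [htotal, hIic, hIoi, hφ_even]
  have hsplit : ∫ x in Set.Iic m, pdf x
      = (∫ x in Set.Iic (0:ℝ), pdf x) + ∫ x in Set.Ioc 0 m, pdf x := by
    rw [← Set.Iic_union_Ioc_eq_Iic hm]
    exact setIntegral_union (Set.Iic_disjoint_Ioc (le_refl 0)) measurableSet_Ioc
      hpdf_int.integrableOn hpdf_int.integrableOn
  have hIoc_le : ∫ x in Set.Ioc (0:ℝ) m, pdf x ≤ m / (s * Real.sqrt (2 * Real.pi)) := by
    have hconst : ∫ x in Set.Ioc (0:ℝ) m, (s * Real.sqrt (2 * Real.pi))⁻¹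
        = m * (s * Real.sqrt (2 * Real.pi))⁻¹ := by
      rw [setIntegral_const, measureReal_def, Real.volume_Ioc, smul_eq_mul, sub_zero,
        ENNReal.toReal_ofReal hm]
    have hmono : ∫ x in Set.Ioc (0:ℝ) m, pdf x
        ≤ ∫ x in Set.Ioc (0:ℝ) m, (s * Real.sqrt (2 * Real.pi))⁻¹ := by
      apply setIntegral_mono_on hpdf_int.integrableOn
        (integrableOn_const measure_Ioc_lt_top.ne) measurableSet_Ioc
      intro x _
      exact hpdf_le x
    rw [hconst] at hmono
    rw [div_eq_mul_inv]
    exact hmono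
  have hP : (1:ℝ) / 2 - m / (s * Real.sqrt (2 * Real.pi)) ≤ ∫ x in Set.Iic (0:ℝ), pdf x := by
    linarith [hsplit, hhalf, hIoc_le]
  -- combine
  have hlog2 : 0 ≤ Real.log 2 := Real.log_nonneg (by norm_num)
  calc Real.log 2 * (1 / 2 - m / (s * Real.sqrt (2 * Real.pi)))
      ≤ Real.log 2 * ((gaussianReal m v) (Set.Iic 0)).toReal := by
        apply mul_le_mul_of_nonneg_left _ hlog2
        rw [hmeas_eq]
        exact hP
    _ ≤ ∫ z, f z ∂(gaussianReal m v) := hstep1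
end
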